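/- Bayesian conditioning of a linear pool does not generally commute with pooling: let Ω have at least 3 elements, λ₁ ∈ (0,1), μ₁ = (0.1, 0, 0.9, 0,...), μ₂ = ... = μₙ = (0, 1, 0, 0,...) (as probability vectors on Ω), and G an event containing states 1 and 2 but not state 3. Then the conditional pooled probability [Σ_i λ_i μ_i]^G assigns probability 0.1·λ₁/(1 − 0.9·λ₁) to state 1, the pool of conditionals Σ_i λ_i μ_i^G assigns probability λ₁ to state 1, and 0.1·λ₁/(1 − 0.9·λ₁) < λ₁; hence [Σ_i λ_i μ_i]^G ≠ Σ_i λ_i μ_i^G. -/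
import Mathlib


def IsProb {Ω : Type*} [Fintype Ω] (p : Ω → ℝ) : Prop :=
  (∀ ω, 0 ≤ p ω) ∧ ∑ ω, p ω = 1

noncomputable def condP {Ω : Type*} [Fintype Ω] [DecidableEq Ω]
    (p : Ω → ℝ) (E : Finset Ω) : Ω → ℝ :=
  fun ω => if ω ∈ E then p ω / ∑ x ∈ E, p x else 0

lemma sum_pair_aux {Ω : Type*} [DecidableEq Ω] (G : Finset Ω)
    (s1 s2 : Ω) (h : s1 ≠ s2) (h1 : s1 ∈ G) (h2 : s2 ∈ G)
    (f : Ω → ℝ) (hf : ∀ x ∈ G, x ≠ s1 → x ≠ s2 → f x = 0) :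
    ∑ x ∈ G, f x = f s1 + f s2 := by
  rw [← Finset.sum_subset (Finset.insert_subset h1 (Finset.singleton_subset_iff.2 h2))
    (fun x hx hx2 => hf x hx (by simp at hx2; tauto) (by simp at hx2; tauto))]
  rw [Finset.sum_insert (by simp [h]), Finset.sum_singleton]

theorem stmt_14 {Ω : Type*} [Fintype Ω] [DecidableEq Ω]
    (s1 s2 s3 : Ω) (h12 : s1 ≠ s2) (h13 : s1 ≠ s3) (h23 : s2 ≠ s3)
    (n : ℕ) (hn : 2 ≤ n)
    (lam : Fin n → ℝ) (hlam0 : ∀ i, 0 ≤ lam i) (hlam1 : ∑ i, lam i = 1)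
    (hlam : lam ⟨0, by omega⟩ ∈ Set.Ioo (0:ℝ) 1)
    (μ : Fin n → Ω → ℝ)
    (hμ1 : μ ⟨0, by omega⟩ = fun ω => if ω = s1 then 0.1 else if ω = s3 then 0.9 else 0)
    (hμi : ∀ i : Fin n, i ≠ ⟨0, by omega⟩ → μ i = fun ω => if ω = s2 then 1 else 0)
    (G : Finset Ω) (hG1 : s1 ∈ G) (hG2 : s2 ∈ G) (hG3 : s3 ∉ G) :
    condP (fun ω => ∑ i, lam i * μ i ω) G s1
        = 0.1 * lam ⟨0, by omega⟩ / (1 - 0.9 * lam ⟨0, by omega⟩) ∧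
    (∑ i, lam i * condP (μ i) G s1) = lam ⟨0, by omega⟩ ∧
    0.1 * lam ⟨0, by omega⟩ / (1 - 0.9 * lam ⟨0, by omega⟩) < lam ⟨0, by omega⟩ ∧
    condP (fun ω => ∑ i, lam i * μ i ω) G
      ≠ fun ω => ∑ i, lam i * condP (μ i) G ω := by
  set z : Fin n := ⟨0, by omega⟩ with hz
  set L : ℝ := lam z with hL
  obtain ⟨hL0, hL1⟩ := hlam
  -- sum of lam over i ≠ z
  have hrest : ∑ i ∈ Finset.univ.erase z, lam i = 1 - L := by
    have := Finset.add_sum_erase Finset.univ lam (Finset.mem_univ z)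
    rw [hlam1] at this
    linarith
  -- pooled values
  have pool1 : (∑ i, lam i * μ i s1) = 0.1 * L := by
    rw [← Finset.add_sum_erase Finset.univ (fun i => lam i * μ i s1) (Finset.mem_univ z)]
    rw [hμ1]
    have : ∑ i ∈ Finset.univ.erase z, lam i * μ i s1 = 0 := by
      apply Finset.sum_eq_zero
      intro i hi
      rw [hμi i (Finset.mem_erase.1 hi).1]
      simp [h12]
    rw [this]
    simp [h13]
    ring
  have pool2 : (∑ i, lam i * μ i s2) = 1 - L := by
    rw [← Finset.add_sum_erase Finset.univ (fun i => lam i * μ i s2) (Finset.mem_univ z)]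
    rw [hμ1]
    have : ∑ i ∈ Finset.univ.erase z, lam i * μ i s2 = 1 - L := by
      rw [← hrest]
      apply Finset.sum_congr rfl
      intro i hi
      rw [hμi i (Finset.mem_erase.1 hi).1]
      simp
    rw [this]
    simp [h12.symm, h23]
  have poolother : ∀ x ∈ G, x ≠ s1 → x ≠ s2 → (∑ i, lam i * μ i x) = 0 := by
    intro x hx hx1 hx2
    apply Finset.sum_eq_zero
    intro i _
    by_cases hiz : i = z
    · subst hiz
      rw [hμ1]
      have hx3 : x ≠ s3 := fun h => hG3 (h ▸ hx)
      simp [hx1, hx3]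
    · rw [hμi i hiz]
      simp [hx2]
  have sumG : ∑ x ∈ G, (∑ i, lam i * μ i x) = 1 - 0.9 * L := by
    rw [sum_pair_aux G s1 s2 h12 hG1 hG2 _ poolother, pool1, pool2]
    ring
  have hden : (0:ℝ) < 1 - 0.9 * L := by nlinarith
  constructor
  · rw [condP]
    simp only [hG1, if_true, sumG, pool1]
  have sumμ0 : ∑ x ∈ G, μ z x = 0.1 := by
    rw [sum_pair_aux G s1 s2 h12 hG1 hG2 _ ?_, hμ1]
    · simp [h13, h12.symm, h23]
    · intro x hx hx1 hx2
      rw [hμ1]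
      have hx3 : x ≠ s3 := fun h => hG3 (h ▸ hx)
      simp [hx1, hx2, hx3]
  have cond0 : condP (μ z) G s1 = 1 := by
    rw [condP]
    simp only [hG1, if_true]
    rw [sumμ0, hμ1]
    norm_num
  have condi : ∀ i : Fin n, i ≠ z → condP (μ i) G s1 = 0 := by
    intro i hi
    rw [condP]
    simp only [hG1, if_true, hμi i hi]
    simp [h12]
  have part2 : (∑ i, lam i * condP (μ i) G s1) = L := by
    rw [← Finset.add_sum_erase Finset.univ (fun i => lam i * condP (μ i) G s1)
      (Finset.mem_univ z), cond0]
    have : ∑ i ∈ Finset.univ.erase z, lam i * condP (μ i) G s1 = 0 := by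
      apply Finset.sum_eq_zero
      intro i hi
      rw [condi i (Finset.mem_erase.1 hi).1]
      ring
    rw [this]
    ring
  refine ⟨part2, ?_, ?_⟩
  · rw [div_lt_iff₀ hden]
    nlinarith
  · intro heq
    have h1 : condP (fun ω => ∑ i, lam i * μ i ω) G s1 = 0.1 * L / (1 - 0.9 * L) := by
      rw [condP]; simp only [hG1, if_true, sumG, pool1]
    have h2 := congrFun heq s1
    rw [h1, part2] at h2
    have h3 : 0.1 * L / (1 - 0.9 * L) < L := by
      rw [div_lt_iff₀ hden]; nlinarith
    linarith
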